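/- The Jacobian of (f,g) at (0,1) is diagonal, and both its eigenvalues are strictly negative if and only if n_p < 8/11 and a < (5/4)·n_p/(1−n_p) (given n_p ∈ (0,1)). Explicitly, the eigenvalues are −(1/4)·(5·n_p + 4·n_p·a − 4·a) and (1/4)·(−8 + 11·n_p), and the first is negative iff a < (5/4)·n_p/(1−n_p) while the second is negative iff n_p < 8/11. -/

import Mathlib

/-- Stability analysis at the equilibrium (0,1): the Jacobian is diagonal with
eigenvalues -(1/4)(5n_p+4n_p a-4a) and (1/4)(-8+11n_p); both eigenvalues are
negative iff n_p < 8/11 and a < (5/4)n_p/(1-n_p). -/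
theorem jacobian_at_zero_one (np a : ℝ) (hnp : np ∈ Set.Ioo (0:ℝ) 1)
    (f g : ℝ → ℝ → ℝ)
    (hf : ∀ x z, f x z = (1/4) * x * (x - 1) * (-3*np*x + 5*np + 4*np*a - 4*a))
    (hg : ∀ x z, g x z = -(1/4) * z * (z - 1) * (-16*np*z + 16*z + 5*np - 8 + 5*np*x)) :
    (deriv (fun z => f 0 z) 1 = 0 ∧ deriv (fun x => g x 1) 0 = 0)
    ∧ deriv (fun x => f x 1) 0 = -(1/4) * (5*np + 4*np*a - 4*a)
    ∧ deriv (fun z => g 0 z) 1 = (1/4) * (-8 + 11*np)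
    ∧ (-(1/4) * (5*np + 4*np*a - 4*a) < 0 ↔ a < (5/4) * np/(1 - np))
    ∧ ((1/4) * (-8 + 11*np) < 0 ↔ np < 8/11)
    ∧ ((deriv (fun x => f x 1) 0 < 0 ∧ deriv (fun z => g 0 z) 1 < 0)
        ↔ (np < 8/11 ∧ a < (5/4) * np/(1 - np))) := by
  obtain ⟨h0, h1⟩ := hnp
  -- the four functions as explicit polynomials
  have hfz : (fun z => f 0 z) = fun _ : ℝ => (0:ℝ) := by
    funext z; rw [hf]; ring
  have hgx : (fun x => g x 1) = fun _ : ℝ => (0:ℝ) := by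
    funext x; rw [hg]; ring
  have hfx : (fun x => f x 1) = fun x : ℝ =>
      (1/4) * x * (x - 1) * (-3*np*x + (5*np + 4*np*a - 4*a)) := by
    funext x; rw [hf]; ring
  have hgz : (fun z => g 0 z) = fun z : ℝ =>
      -(1/4) * z * (z - 1) * ((-16*np + 16)*z + (5*np - 8)) := by
    funext z; rw [hg]; ring
  have df : deriv (fun x => f x 1) 0 = -(1/4) * (5*np + 4*np*a - 4*a) := by
    rw [hfx]
    have id0 : HasDerivAt (fun x : ℝ => x) 1 0 := hasDerivAt_id 0
    have h := (((id0.const_mul (1/4)).mul (id0.sub_const 1)).mul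
      ((id0.const_mul (-3*np)).add_const (5*np + 4*np*a - 4*a)))
    have h' : HasDerivAt (fun x : ℝ =>
        (1/4) * x * (x - 1) * (-3*np*x + (5*np + 4*np*a - 4*a)))
        (-(1/4) * (5*np + 4*np*a - 4*a)) 0 := by
      refine h.congr_deriv ?_; simp only [Pi.mul_apply]; ring
    exact h'.deriv
  have dg : deriv (fun z => g 0 z) 1 = (1/4) * (-8 + 11*np) := by
    rw [hgz]
    have id1 : HasDerivAt (fun z : ℝ => z) 1 1 := hasDerivAt_id 1
    have h := (((id1.const_mul (-(1/4))).mul (id1.sub_const 1)).mul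
      ((id1.const_mul (-16*np + 16)).add_const (5*np - 8)))
    have h' : HasDerivAt (fun z : ℝ =>
        -(1/4) * z * (z - 1) * ((-16*np + 16)*z + (5*np - 8)))
        ((1/4) * (-8 + 11*np)) 1 := by
      refine h.congr_deriv ?_; simp only [Pi.mul_apply]; ring
    exact h'.deriv
  have i1 : (-(1/4) * (5*np + 4*np*a - 4*a) < 0 ↔ a < (5/4) * np/(1 - np)) := by
    rw [lt_div_iff₀ (by linarith : (0:ℝ) < 1 - np)]
    constructor <;> intro h <;> nlinarith
  have i2 : ((1/4) * (-8 + 11*np) < 0 ↔ np < 8/11) := by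
    constructor <;> intro h <;> linarith
  refine ⟨⟨?_, ?_⟩, df, dg, i1, i2, ?_⟩
  · rw [hfz]; simp
  · rw [hgx]; simp
  · rw [df, dg, i1, i2, and_comm]
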